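/- Let X be a directed space (a T0 space in which every directed-open set is open) such that the convergence class S_X is topological, i.e., S_X contains every pair of a convergent net and its limit in the topology S(X). Then X is a continuous space: for every x ∈ X there exists a directed subset D with D → x and d ≪_n x for every d ∈ D. -/
import Mathlib


/-- A net in `X`: a function from a (nonempty, directed) preordered index type to `X`. -/
structure PNet (X : Type) : Type 1 where
  ι : Type
  le : ι → ι → Prop
  refl : ∀ i, le i i
  trans : ∀ i j k, le i j → le j k → le i k
  nonempty : Nonempty ι
  directed : ∀ i j, ∃ k, le i k ∧ le j k
  toFun : ι → X

/-- A net is eventually in a set. -/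
def PNet.Eventually {X : Type} (n : PNet X) (U : Set X) : Prop :=
  ∃ j, ∀ k, n.le j k → n.toFun k ∈ U

/-- Convergence of a net in a topological space. -/
def PNet.ConvTo {X : Type} [TopologicalSpace X] (n : PNet X) (x : X) : Prop :=
  ∀ U : Set X, IsOpen U → x ∈ U → n.Eventually U

/-- The specialization order of a topological space: `x ≤ y` iff `x ∈ closure {y}`. -/
def specLe {X : Type} [TopologicalSpace X] (x y : X) : Prop := x ∈ closure {y}

/-- Convergence of a directed subset `D` (viewed as a monotone net indexed by itself)
to a point `x`. -/
def dirConv {X : Type} [TopologicalSpace X] (D : Set X) (x : X) : Prop :=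
  ∀ V : Set X, IsOpen V → x ∈ V → ∃ d ∈ D, ∀ e ∈ D, specLe d e → e ∈ V

/-- `U` is directed-open. -/
def DOpen {X : Type} [TopologicalSpace X] (U : Set X) : Prop :=
  ∀ (D : Set X) (x : X), D.Nonempty → DirectedOn specLe D → dirConv D x → x ∈ U →
    (D ∩ U).Nonempty

/-- `y` is an eventual lower bound of the net `n`. -/
def eventualLB {X : Type} [TopologicalSpace X] (n : PNet X) (y : X) : Prop :=
  ∃ k, ∀ i, n.le k i → specLe y (n.toFun i)

/-- The pair `(n, x)` is in the class `S_X`: some directed set of eventual lower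
bounds of `n` converges to `x`. -/
def SPair {X : Type} [TopologicalSpace X] (n : PNet X) (x : X) : Prop :=
  ∃ D : Set X, D.Nonempty ∧ DirectedOn specLe D ∧ (∀ d ∈ D, eventualLB n d) ∧
    dirConv D x

/-- `d ≪ₙ x`: every net converging to `x` has some element above `d`. -/
def wbn {X : Type} [TopologicalSpace X] (d x : X) : Prop :=
  ∀ n : PNet X, n.ConvTo x → ∃ i, specLe d (n.toFun i)

/-- Let `X` be a directed space (a `T0` space in which every directed-open set is
open) whose convergence class `S_X` is topological: `S_X` contains every pair of a
convergent net and its limit in the topology `S(X)` determined by `S_X`. Then `X` is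
a continuous space: for every `x` there is a directed `D` with `D → x` and `d ≪ₙ x`
for all `d ∈ D`. -/
theorem stmt17 {X : Type} [TopologicalSpace X] [T0Space X]
    (hdirected : ∀ U : Set X, DOpen U ↔ IsOpen U)
    (TS : TopologicalSpace X)
    (hTS : ∀ U : Set X, TS.IsOpen U ↔
      ∀ (n : PNet X) (x : X), SPair n x → x ∈ U → n.Eventually U)
    (htop : ∀ (n : PNet X) (x : X),
      (∀ U : Set X, TS.IsOpen U → x ∈ U → n.Eventually U) → SPair n x) :
    ∀ x : X, ∃ D : Set X, D.Nonempty ∧ DirectedOn specLe D ∧ dirConv D x ∧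
      ∀ d ∈ D, wbn d x := by
  have spec_refl : ∀ d : X, specLe d d := fun d => subset_closure rfl
  intro x
  -- the canonical net converging to x (w.r.t. TS)
  set N : PNet X :=
    { ι := {p : Set X × X // TS.IsOpen p.1 ∧ x ∈ p.1 ∧ p.2 ∈ p.1}
      le := fun a b => b.val.1 ⊆ a.val.1
      refl := fun i => Set.Subset.rfl
      trans := fun i j k hij hjk => hjk.trans hij
      nonempty := ⟨⟨(Set.univ, x), TS.isOpen_univ, trivial, trivial⟩⟩
      directed := fun a b =>
        ⟨⟨(a.val.1 ∩ b.val.1, x), TS.isOpen_inter _ _ a.2.1 b.2.1, ⟨a.2.2.1, b.2.2.1⟩,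
          ⟨a.2.2.1, b.2.2.1⟩⟩, Set.inter_subset_left, Set.inter_subset_right⟩
      toFun := fun p => p.val.2 } with hN
  have hconvN : ∀ U : Set X, TS.IsOpen U → x ∈ U → N.Eventually U := by
    intro U hU hxU
    exact ⟨⟨(U, x), hU, hxU, hxU⟩, fun k hk => hk k.2.2.2⟩
  rcases htop N x hconvN with ⟨D, hne, hdir, hlb, hconv⟩
  refine ⟨D, hne, hdir, hconv, ?_⟩
  intro d hd
  rcases hlb d hd with ⟨k, hk⟩
  have hkopen : TS.IsOpen k.val.1 := k.2.1
  have hxk : x ∈ k.val.1 := k.2.2.1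
  have hbelow : ∀ b ∈ k.val.1, specLe d b := by
    intro b hb
    exact hk ⟨(k.val.1, b), hkopen, hxk, hb⟩ Set.Subset.rfl
  intro m hm
  rcases hm k.val.1 hkopen hxk with ⟨j, hj⟩
  exact ⟨j, hbelow _ (hj j (m.refl j))⟩
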